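/- arXiv:1609.06687 — 3 statements merged into one kernel-verified Lean document; each statement's English description precedes it below -/
import Mathlib

section
/- Let d be a fundamental discriminant with d ≡ 2 (mod 3) or d ≡ 3 (mod 9), and let K be an imaginary quadratic field in which every prime dividing 3d splits (the Heegner hypothesis for 3d; in particular 3 splits in K). Let E_d be the elliptic curve over K defined by the Weierstrass equation y² = x³ − 432d. Then E_d(K)[3] = 0; that is, the only K-rational point P of E_d with 3·P = O is the point at infinity O. -/
open scoped NumberField

open scoped Classical in
open WeierstrassCurve.Affine WeierstrassCurve.Affine.Point IsDedekindDomain in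
theorem KL54.partA_aux (K : Type) [Field K] (b : K) (W : WeierstrassCurve.Affine K)
    (h3ne : (3:K) ≠ 0) (ha1 : W.a₁ = 0) (ha2 : W.a₂ = 0) (ha3 : W.a₃ = 0) (ha4 : W.a₄ = 0)
    (ha6 : W.a₆ = b) (P : W.Point) (h3 : 3 • P = 0) :
    P = 0 ∨ (∃ y : K, y ^ 2 = b) ∨ (∃ x y : K, x ^ 3 = -4 * b ∧ y ^ 2 = -3 * b) := by
  rcases P with _ | @⟨x, y, h⟩
  · exact Or.inl rfl
  rw [show (3 : ℕ) • Point.some _ _ h = Point.some _ _ h + Point.some _ _ h + Point.some _ _ h from by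
    rw [succ_nsmul, two_nsmul]] at h3
  by_cases hy : y = W.negY x y
  · rw [add_self_of_Y_eq hy, zero_add] at h3
    exact Or.inl h3
  · rw [add_self_of_Y_ne hy] at h3
    have key := eq_neg_of_add_eq_zero_left h3
    rw [neg_some, Point.some.injEq] at key
    obtain ⟨hx, -⟩ := key
    have heq : y ^ 2 = x ^ 3 + b := by
      have := (W.equation_iff x y).mp h.1
      rw [ha1, ha2, ha3, ha4, ha6] at this
      linear_combination this
    have hy2 : (2 : K) * y ≠ 0 := by
      intro hcon
      apply sub_ne_zero.mpr hy
      rw [negY, ha1, ha3]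
      linear_combination hcon
    have hyy : y + y ≠ 0 := fun hcon => hy2 (by linear_combination hcon)
    rw [addX, slope_of_Y_ne rfl hy, ha1, ha2, ha4, negY, ha1, ha3] at hx
    field_simp [hyy] at hx
    have hmain : x * (x ^ 3 + 4 * b) = 0 := by
      have h5 : 9 * x ^ 4 = 12 * x * y ^ 2 := by linear_combination hx
      have hmain3 : (3:K) * (x * (x ^ 3 + 4 * b)) = 0 := by
        linear_combination (-1 : K) * h5 - 12 * x * heq
      exact (mul_eq_zero.mp hmain3).resolve_left h3ne
    rcases mul_eq_zero.mp hmain with h0 | h0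
    · refine Or.inr (Or.inl ⟨y, ?_⟩)
      rw [h0] at heq
      linear_combination heq
    · refine Or.inr (Or.inr ⟨x, y, by linear_combination h0, ?_⟩)
      have : x ^ 3 = -4 * b := by linear_combination h0
      rw [this] at heq
      linear_combination heq

open IsDedekindDomain in
theorem KL54.no_sqrt_neg_one (K : Type) [Field K] [NumberField K] (γ : K) (hγ : γ * γ = -1)
    (P Q : Ideal (𝓞 K)) (hne : P ≠ Q) (hP : P.IsPrime) (hQ : Q.IsPrime)
    (hspan : Ideal.span {(2 : 𝓞 K)} = P * Q) : False := by
  have hint : IsIntegral ℤ γ := by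
    refine ⟨Polynomial.X ^ 2 + Polynomial.C 1, Polynomial.monic_X_pow_add_C 1 two_ne_zero, ?_⟩
    simp [sq, hγ]
  set g : 𝓞 K := ⟨γ, hint⟩ with hg
  have hmap : algebraMap (𝓞 K) K g = γ := rfl
  have hg2 : g * g = -1 := by
    apply IsFractionRing.injective (𝓞 K) K
    rw [map_mul, hmap, hγ, map_neg, map_one]
  have h2ne : (2 : 𝓞 K) ≠ 0 := two_ne_zero
  have hPbot : P ≠ ⊥ := by
    rintro rfl
    rw [Ideal.bot_mul, Ideal.span_singleton_eq_bot] at hspan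
    exact h2ne hspan
  have hQbot : Q ≠ ⊥ := by
    rintro rfl
    rw [Ideal.mul_bot, Ideal.span_singleton_eq_bot] at hspan
    exact h2ne hspan
  have hPmax := hP.isMaximal hPbot
  have hQmax := hQ.isMaximal hQbot
  have hsq : (1 + g) * (1 + g) = 2 * g := by ring_nf; linear_combination hg2
  have hmem : ∀ R : Ideal (𝓞 K), R.IsPrime → P * Q ≤ R → (1 + g) ∈ R := by
    intro R hR hle
    have h2g : (2 : 𝓞 K) * g ∈ R := by
      apply hle
      rw [← hspan]
      exact Ideal.mem_span_singleton.mpr ⟨g, rfl⟩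
    have : (1 + g) ^ 2 ∈ R := by rw [sq, hsq]; exact h2g
    exact hR.mem_of_pow_mem 2 this
  have h1P : (1 + g) ∈ P := hmem P hP Ideal.mul_le_left
  have h1Q : (1 + g) ∈ Q := hmem Q hQ Ideal.mul_le_right
  have hcop : P ⊔ Q = ⊤ := hPmax.coprime_of_ne hQmax hne
  have h1PQ : (1 + g) ∈ Ideal.span {(2 : 𝓞 K)} := by
    rw [hspan, Ideal.mul_eq_inf_of_coprime hcop]
    exact ⟨h1P, h1Q⟩
  obtain ⟨α, hα⟩ := Ideal.mem_span_singleton.mp h1PQ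
  have key : (2 : 𝓞 K) * (α * α - α) + 1 = 0 := by
    have h4 : (2 * α - 1) * (2 * α - 1) = -1 := by
      rw [show (2:𝓞 K) * α - 1 = g by linear_combination -hα]; exact hg2
    have h8 : (2 : 𝓞 K) * ((2:𝓞 K) * (α * α - α) + 1) = 0 := by linear_combination h4
    rcases mul_eq_zero.mp h8 with h | h
    · exact absurd h h2ne
    · exact h
  have h1mem : (1 : 𝓞 K) ∈ P := by
    have : (1 : 𝓞 K) ∈ Ideal.span {(2 : 𝓞 K)} := by
      rw [show (1 : 𝓞 K) = 2 * (α - α * α) by linear_combination key]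
      exact Ideal.mem_span_singleton.mpr ⟨_, rfl⟩
    rw [hspan] at this
    exact Ideal.mul_le_left this
  exact hP.ne_top ((Ideal.eq_top_iff_one P).mpr h1mem)

open IsDedekindDomain in
theorem KL54.not_isSquare_of_split_odd_val (K : Type) [Field K] [NumberField K]
    (ℓ : ℕ) (hℓ : ℓ.Prime) (k : ℕ) (hk : Odd k) (u : ℤ) (hu : ¬ ((ℓ : ℤ) ∣ u))
    (P Q : Ideal (𝓞 K)) (hne : P ≠ Q) (hP : P.IsPrime) (hQ : Q.IsPrime)
    (hspan : Ideal.span {(ℓ : 𝓞 K)} = P * Q) :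
    ¬ IsSquare (((ℓ ^ k * u : ℤ) : K)) := by
  rintro ⟨γ, hγ⟩
  have hu0 : u ≠ 0 := fun h => hu (h ▸ dvd_zero _)
  have hℓ0 : (ℓ : 𝓞 K) ≠ 0 := Nat.cast_ne_zero.mpr hℓ.pos.ne'
  have hPbot : P ≠ ⊥ := by
    rintro rfl
    rw [Ideal.bot_mul, Ideal.span_singleton_eq_bot] at hspan
    exact hℓ0 hspan
  have hQbot : Q ≠ ⊥ := by
    rintro rfl
    rw [Ideal.mul_bot, Ideal.span_singleton_eq_bot] at hspan
    exact hℓ0 hspan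
  set v : HeightOneSpectrum (𝓞 K) := ⟨P, hP, hPbot⟩ with hv
  have hPdvd : P ∣ Ideal.span {(ℓ : 𝓞 K)} := hspan ▸ dvd_mul_right P Q
  have hP2 : ¬ P ^ 2 ∣ Ideal.span {(ℓ : 𝓞 K)} := by
    intro hdvd
    rw [hspan, sq] at hdvd
    have hPQ : P ∣ Q := (mul_dvd_mul_iff_left (show P ≠ 0 from hPbot)).mp hdvd
    exact hne ((hQ.isMaximal hQbot).eq_of_le hP.ne_top (Ideal.le_of_dvd hPQ)).symm
  have hvℓ : v.intValuationDef (ℓ : 𝓞 K) =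
      ((Multiplicative.ofAdd (-1 : ℤ) : Multiplicative ℤ) : WithZero (Multiplicative ℤ)) := by
    have hle : v.intValuationDef (ℓ : 𝓞 K) ≤ Multiplicative.ofAdd (-1 : ℤ) := by
      have := (v.intValuation_le_pow_iff_dvd ((ℓ : 𝓞 K)) 1).mpr (by rw [pow_one]; exact hPdvd)
      exact this
    have hnle : ¬ v.intValuationDef (ℓ : 𝓞 K) ≤ Multiplicative.ofAdd (-2 : ℤ) := by
      intro hcon
      have := (v.intValuation_le_pow_iff_dvd ((ℓ : 𝓞 K)) 2).mp (by exact hcon)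
      exact hP2 this
    obtain ⟨a, ha⟩ := WithZero.ne_zero_iff_exists.mp (v.intValuation_ne_zero _ hℓ0)
    rw [HeightOneSpectrum.intValuation_apply] at ha
    rw [← ha] at hle hnle ⊢
    rw [WithZero.coe_le_coe] at hle hnle
    have h1 : Multiplicative.toAdd a ≤ -1 := hle
    have h2 : ¬ Multiplicative.toAdd a ≤ -2 := hnle
    rw [← ofAdd_toAdd a, show Multiplicative.toAdd a = -1 by omega]
  have hvu : v.intValuationDef ((u : ℤ) : 𝓞 K) = 1 := by
    rcases lt_or_eq_of_le (v.intValuation_le_one ((u : ℤ) : 𝓞 K)) with hlt | heq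
    · exfalso
      have hdvd := (v.intValuation_lt_one_iff_dvd _).mp hlt
      have humem : ((u : ℤ) : 𝓞 K) ∈ P := by
        rw [Ideal.dvd_span_singleton] at hdvd
        exact hdvd
      have hℓmem : ((ℓ : ℕ) : 𝓞 K) ∈ P := by
        have : ((ℓ : ℕ) : 𝓞 K) ∈ Ideal.span {(ℓ : 𝓞 K)} := Ideal.mem_span_singleton_self _
        rw [hspan] at this
        exact Ideal.mul_le_left this
      obtain ⟨a, b, hab⟩ :=
        (Prime.coprime_iff_not_dvd (Nat.prime_iff_prime_int.mp hℓ)).mpr hu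
      have h1 : (1 : 𝓞 K) ∈ P := by
        have hsum := P.add_mem (P.mul_mem_left ((a : ℤ) : 𝓞 K) (by exact_mod_cast hℓmem))
          (P.mul_mem_left ((b : ℤ) : 𝓞 K) humem)
        have hcast : ((a * ℓ + b * u : ℤ) : 𝓞 K) = (1 : 𝓞 K) := by rw [hab]; push_cast; ring
        rw [← hcast]
        push_cast
        exact_mod_cast hsum
      exact hP.ne_top ((Ideal.eq_top_iff_one P).mpr h1)
    · exact heq
  have hval : v.valuation K (((ℓ ^ k * u : ℤ) : K)) =
      ((Multiplicative.ofAdd (-(k : ℤ)) : Multiplicative ℤ) : WithZero (Multiplicative ℤ)) := by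
    have hcast : ((ℓ ^ k * u : ℤ) : K) =
        algebraMap (𝓞 K) K (((ℓ : ℕ) : 𝓞 K) ^ k * ((u : ℤ) : 𝓞 K)) := by
      rw [map_mul, map_pow, map_natCast, map_intCast]; push_cast; ring
    rw [hcast, v.valuation_of_algebraMap, map_mul, map_pow, HeightOneSpectrum.intValuation_apply,
      HeightOneSpectrum.intValuation_apply, hvℓ, hvu, mul_one, ← WithZero.coe_pow,
      WithZero.coe_inj, ← ofAdd_nsmul]
    congr 1
    simp
  have hn0 : ((ℓ ^ k * u : ℤ) : K) ≠ 0 := by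
    have : (ℓ ^ k * u : ℤ) ≠ 0 :=
      mul_ne_zero (pow_ne_zero _ (Int.natCast_ne_zero.mpr hℓ.pos.ne')) hu0
    exact_mod_cast this
  have hγ0 : γ ≠ 0 := by
    rintro rfl
    rw [mul_zero] at hγ
    exact hn0 hγ
  have hvmul : v.valuation K (((ℓ ^ k * u : ℤ) : K)) = v.valuation K γ * v.valuation K γ := by
    rw [hγ, map_mul]
  rw [hval] at hvmul
  obtain ⟨b, hb⟩ :=
    WithZero.ne_zero_iff_exists.mp (show v.valuation K γ ≠ 0 from (v.valuation K).ne_zero_iff.mpr hγ0)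
  rw [← hb, ← WithZero.coe_mul, WithZero.coe_inj] at hvmul
  have htoadd := congrArg Multiplicative.toAdd hvmul
  rw [toAdd_mul, toAdd_ofAdd] at htoadd
  obtain ⟨m, hm⟩ := hk
  omega

open scoped Classical in
/-- **Lemma 5.4 of Kriz–Li.** Let `d` be a fundamental discriminant with `d ≡ 2 (mod 3)`
or `d ≡ 3 (mod 9)`, and let `K` be an imaginary quadratic field in which every prime
dividing `3d` splits (the Heegner hypothesis for `3d`). Then the elliptic curve
`E_d : y² = x³ − 432d` over `K` has trivial 3-torsion: `E_d(K)[3] = 0`. -/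
theorem Ed_three_torsion_trivial_over_heegner_field
    (d : ℤ)
    (hfund : (d % 4 = 1 ∧ Squarefree d) ∨
      (∃ m : ℤ, d = 4 * m ∧ Squarefree m ∧ (m % 4 = 2 ∨ m % 4 = 3)))
    (hcong : d % 3 = 2 ∨ d % 9 = 3)
    (K : Type) [Field K] [NumberField K]
    (hquadratic : Module.finrank ℚ K = 2)
    (himaginary : IsEmpty (K →+* ℝ))
    (hheegner : ∀ ℓ : ℕ, ℓ.Prime → (ℓ : ℤ) ∣ 3 * d →
      ∃ P Q : Ideal (𝓞 K), P ≠ Q ∧ P.IsPrime ∧ Q.IsPrime ∧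
        Ideal.span {(ℓ : 𝓞 K)} = P * Q)
    (Ed : WeierstrassCurve K)
    (hEd : Ed = { a₁ := 0, a₂ := 0, a₃ := 0, a₄ := 0, a₆ := -432 * (d : K) }) :
    ∀ P : Ed.toAffine.Point, 3 • P = 0 → P = 0 := by
  -- helper: refute squareness via odd valuation at a split prime
  have refute : ∀ (n : ℤ) (ℓ : ℕ), ℓ.Prime → (ℓ : ℤ) ∣ 3 * d → ∀ k : ℕ, Odd k →
      ∀ u : ℤ, ¬ ((ℓ : ℤ) ∣ u) → n = (ℓ : ℤ) ^ k * u → ¬ IsSquare ((n : K)) := by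
    intro n ℓ hℓ hdvd k hk u hu hn
    obtain ⟨P, Q, hne, hP, hQ, hs⟩ := hheegner ℓ hℓ hdvd
    rw [hn]
    exact KL54.not_isSquare_of_split_odd_val K ℓ hℓ k hk u hu P Q hne hP hQ hs
  -- helper: refute squareness of -c²
  have refuteneg : ∀ (n c : ℤ), c ≠ 0 → n = -(c ^ 2) → (2 : ℤ) ∣ 3 * d →
      ¬ IsSquare ((n : K)) := by
    rintro n c hc hn h2 ⟨γ, hγ⟩
    obtain ⟨P, Q, hne, hP, hQ, hs⟩ := hheegner 2 Nat.prime_two h2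
    rw [show (((2:ℕ) : 𝓞 K)) = (2 : 𝓞 K) by norm_cast] at hs
    have hcK : ((c : ℤ) : K) ≠ 0 := Int.cast_ne_zero.mpr hc
    refine KL54.no_sqrt_neg_one K (γ / (c : K)) ?_ P Q hne hP hQ hs
    rw [hn] at hγ
    push_cast at hγ
    field_simp
    linear_combination -hγ
  -- helper: extract a prime factor
  have getprime : ∀ x : ℤ, x.natAbs ≠ 1 → ∃ (ℓ : ℕ) (w : ℤ), ℓ.Prime ∧ x = (ℓ : ℤ) * w := by
    intro x h1
    obtain ⟨p, hp, hpd⟩ := Int.exists_prime_and_dvd h1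
    obtain ⟨w, hw⟩ := (Int.natAbs_dvd).mpr hpd
    exact ⟨p.natAbs, w, Int.prime_iff_natAbs_prime.mp hp, hw⟩
  -- helper: squarefree blocks double divisibility
  have sfhelp : ∀ (x w : ℤ) (ℓ : ℕ), ℓ.Prime → Squarefree x → x = (ℓ : ℤ) * w →
      ¬ ((ℓ : ℤ) ∣ w) := by
    intro x w ℓ hp hsf hx hdvd
    obtain ⟨t, ht⟩ := hdvd
    have hunit : IsUnit ((ℓ : ℤ)) := hsf (ℓ : ℤ) ⟨t, by rw [hx, ht]; ring⟩
    rw [Int.isUnit_iff] at hunit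
    have := hp.two_le
    omega
  -- helpers: prime divisors of 4 and 9
  have hp9 : ∀ ℓ : ℕ, ℓ.Prime → (ℓ : ℤ) ∣ 9 → ℓ = 3 := by
    intro ℓ hp h
    have hn : ℓ ∣ 3 ^ 2 := by
      have : (ℓ : ℤ) ∣ ((3 ^ 2 : ℕ) : ℤ) := by push_cast; exact_mod_cast h
      exact_mod_cast this
    exact (Nat.prime_dvd_prime_iff_eq hp Nat.prime_three).mp (hp.dvd_of_dvd_pow hn)
  have hp4 : ∀ ℓ : ℕ, ℓ.Prime → (ℓ : ℤ) ∣ 4 → ℓ = 2 := by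
    intro ℓ hp h
    have hn : ℓ ∣ 2 ^ 2 := by
      have : (ℓ : ℤ) ∣ ((2 ^ 2 : ℕ) : ℤ) := by push_cast; exact_mod_cast h
      exact_mod_cast this
    exact (Nat.prime_dvd_prime_iff_eq hp Nat.prime_two).mp (hp.dvd_of_dvd_pow hn)
  -- d is not a square in K
  have hnsq_d : ¬ IsSquare ((d : K)) := by
    rcases hfund with ⟨h4, hsf⟩ | ⟨m, hm4, hsf, hm⟩
    · have hna : d.natAbs ≠ 1 := by rcases hcong with h | h <;> omega
      obtain ⟨ℓ, w, hℓp, hw⟩ := getprime d hna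
      refine refute d ℓ hℓp ⟨3 * w, by rw [hw]; ring⟩ 1 odd_one w
        (sfhelp d w ℓ hℓp hsf hw) (by rw [pow_one]; exact hw)
    · rcases hm with h2 | h3
      · obtain ⟨w, hwm⟩ : (2 : ℤ) ∣ m := by omega
        have hw2 : ¬ ((2 : ℤ) ∣ w) := by
          intro hdvd
          obtain ⟨t, ht⟩ := hdvd
          have : IsUnit ((2 : ℤ)) := hsf 2 ⟨t, by rw [hwm, ht]; ring⟩
          rw [Int.isUnit_iff] at this
          omega
        refine refute d 2 Nat.prime_two (by omega) 3 (by decide) w ?_ ?_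
        · exact_mod_cast hw2
        · push_cast
          rw [hm4, hwm]; ring
      · by_cases hm1 : m = -1
        · exact refuteneg d 2 (by norm_num) (by omega) (by omega)
        · have hna : m.natAbs ≠ 1 := by omega
          obtain ⟨ℓ, w, hℓp, hw⟩ := getprime m hna
          have hmodd : m % 2 = 1 := by omega
          have hℓ2 : ℓ ≠ 2 := by
            rintro rfl
            obtain ⟨t, ht⟩ : (2:ℤ) ∣ m := ⟨w, by exact_mod_cast hw⟩
            omega
          refine refute d ℓ hℓp ⟨12 * w, by rw [hm4, hw]; ring⟩ 1 odd_one (4 * w) ?_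
            (by rw [pow_one, hm4, hw]; ring)
          intro hdvd
          rcases (Nat.prime_iff_prime_int.mp hℓp).dvd_mul.mp hdvd with h | h
          · exact hℓ2 (hp4 ℓ hℓp h)
          · exact sfhelp m w ℓ hℓp hsf hw h
  -- -3d is not a square in K
  have hnsq_3d : ¬ IsSquare (((-3 * d : ℤ) : K)) := by
    rcases hcong with h3 | h9
    · refine refute (-3 * d) 3 Nat.prime_three ⟨d, rfl⟩ 1 odd_one (-d) (by omega)
        (by push_cast; ring)
    · obtain ⟨e, he⟩ : (3 : ℤ) ∣ d := by omega
      have he3 : e % 3 = 1 := by omega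
      rcases hfund with ⟨h4, hsf⟩ | ⟨m, hm4, hsf, hm⟩
      · have hesf : Squarefree e := by
          refine Squarefree.squarefree_of_dvd ⟨3, by rw [he]; ring⟩ hsf
        have hena : e.natAbs ≠ 1 := by omega
        obtain ⟨ℓ, w, hℓp, hw⟩ := getprime e hena
        have hℓ3 : ℓ ≠ 3 := by
          rintro rfl
          obtain ⟨t, ht⟩ : (3:ℤ) ∣ e := ⟨w, by exact_mod_cast hw⟩
          omega
        refine refute (-3 * d) ℓ hℓp ⟨9 * w, by rw [he, hw]; ring⟩ 1 odd_one (-9 * w) ?_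
          (by rw [pow_one, he, hw]; ring)
        intro hdvd
        have hdvd9w : (ℓ : ℤ) ∣ 9 * w := by
          rwa [show (-9 * w : ℤ) = -(9 * w) by ring, dvd_neg] at hdvd
        rcases (Nat.prime_iff_prime_int.mp hℓp).dvd_mul.mp hdvd9w with h | h
        · exact hℓ3 (hp9 ℓ hℓp h)
        · exact sfhelp e w ℓ hℓp hesf hw h
      · -- d = 4m, d % 9 = 3
        obtain ⟨f, hf⟩ : (3 : ℤ) ∣ m := by omega
        have hfsf : Squarefree f := Squarefree.squarefree_of_dvd ⟨3, by rw [hf]; ring⟩ hsf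
        have hf3 : f % 3 = 1 := by omega
        rcases hm with h2 | h3m
        · -- m % 4 = 2 : use ℓ = 2, k = 3
          obtain ⟨g, hg⟩ : (2 : ℤ) ∣ f := by omega
          have hgodd : ¬ ((2 : ℤ) ∣ g) := by
            intro hdvd
            obtain ⟨t, ht⟩ := hdvd
            have : IsUnit ((2 : ℤ)) := hfsf 2 ⟨t, by rw [hg, ht]; ring⟩
            rw [Int.isUnit_iff] at this
            omega
          refine refute (-3 * d) 2 Nat.prime_two (by omega) 3 (by decide) (-9 * g) ?_ ?_
          · intro hdvd
            apply hgodd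
            have : (2 : ℤ) ∣ 9 * g := by
              rwa [show (-9 * g : ℤ) = -(9 * g) by ring, dvd_neg] at hdvd
            omega
          · rw [hm4, hf, hg]; push_cast; ring
        · -- m % 4 = 3
          by_cases hf1 : f = 1
          · -- d = 12, -3d = -36
            refine refuteneg (-3 * d) 6 (by norm_num) (by omega) (by omega)
          · have hna : f.natAbs ≠ 1 := by omega
            obtain ⟨ℓ, w, hℓp, hw⟩ := getprime f hna
            have hℓ3 : ℓ ≠ 3 := by
              rintro rfl
              obtain ⟨t, ht⟩ : (3:ℤ) ∣ f := ⟨w, by exact_mod_cast hw⟩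
              omega
            have hfodd : f % 2 = 1 := by omega
            have hℓ2 : ℓ ≠ 2 := by
              rintro rfl
              obtain ⟨t, ht⟩ : (2:ℤ) ∣ f := ⟨w, by exact_mod_cast hw⟩
              omega
            refine refute (-3 * d) ℓ hℓp ⟨36 * w, by rw [hm4, hf, hw]; ring⟩ 1 odd_one
              (-36 * w) ?_ (by rw [pow_one, hm4, hf, hw]; ring)
            intro hdvd
            have hdvd36w : (ℓ : ℤ) ∣ 36 * w := by
              rwa [show (-36 * w : ℤ) = -(36 * w) by ring, dvd_neg] at hdvd
            have hdvd36w' : (ℓ : ℤ) ∣ 4 * (9 * w) := by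
              rwa [show (4 * (9 * w) : ℤ) = 36 * w by ring]
            rcases (Nat.prime_iff_prime_int.mp hℓp).dvd_mul.mp hdvd36w' with h | h
            · exact hℓ2 (hp4 ℓ hℓp h)
            · rcases (Nat.prime_iff_prime_int.mp hℓp).dvd_mul.mp h with h' | h'
              · exact hℓ3 (hp9 ℓ hℓp h')
              · exact sfhelp f w ℓ hℓp hfsf hw h'
  -- Part A: reduce torsion to squares
  subst hEd
  have h3ne : (3 : K) ≠ 0 := three_ne_zero
  intro P hP3
  rcases KL54.partA_aux K (-432 * (d : K))
      (({ a₁ := 0, a₂ := 0, a₃ := 0, a₄ := 0, a₆ := -432 * (d : K) } :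
        WeierstrassCurve K).toAffine)
      h3ne rfl rfl rfl rfl rfl P hP3 with h0 | ⟨y, hy⟩ | ⟨x, y, hx, hy⟩
  · exact h0
  · exfalso
    apply hnsq_3d
    refine ⟨y / 12, ?_⟩
    push_cast
    field_simp
    linear_combination -hy
  · exfalso
    apply hnsq_d
    refine ⟨y / 36, ?_⟩
    field_simp
    linear_combination -hy
end

section
/- Let F be a field of characteristic different from 2 and 3, and let d ∈ F be nonzero. Assume that neither d nor −3d is a square in F. Then the elliptic curve E_d over F defined by the Weierstrass equation y² = x³ − 432d has no F-rational point of order 3; that is, every point P ∈ E_d(F) with 3·P = O satisfies P = O. -/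
open Classical in
/-- **Field-theoretic content of Lemmas 5.4–5.5 of Kriz–Li.** Let `F` be a field of
characteristic different from `2` and `3`, and let `d ∈ F` be nonzero such that neither
`d` nor `−3d` is a square in `F`. Then the elliptic curve `E_d : y² = x³ − 432d` over
`F` has no `F`-rational point of order 3: every `P ∈ E_d(F)` with `3·P = O` is `O`. -/
theorem Ed_no_three_torsion_of_not_square
    (F : Type) [Field F] (hchar2 : (2 : F) ≠ 0) (hchar3 : (3 : F) ≠ 0)
    (d : F) (hd : d ≠ 0)
    (hsq : ¬ IsSquare d) (hsq' : ¬ IsSquare (-3 * d))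
    (Ed : WeierstrassCurve F)
    (hEd : Ed = { a₁ := 0, a₂ := 0, a₃ := 0, a₄ := 0, a₆ := -432 * d }) :
    ∀ P : Ed.toAffine.Point, 3 • P = 0 → P = 0 := by
  subst hEd
  intro P h3
  revert h3
  rcases P with _ | @⟨x, y, hP⟩
  · intro _; rfl
  intro h3
  let W : WeierstrassCurve.Affine F :=
    ({ a₁ := 0, a₂ := 0, a₃ := 0, a₄ := 0, a₆ := -432 * d } : WeierstrassCurve F).toAffine
  have hW : W = ({ a₁ := 0, a₂ := 0, a₃ := 0, a₄ := 0, a₆ := -432 * d } : WeierstrassCurve F).toAffine := rfl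
  exfalso
  have h3' : (WeierstrassCurve.Affine.Point.some _ _ hP) + (WeierstrassCurve.Affine.Point.some _ _ hP)
      + (WeierstrassCurve.Affine.Point.some _ _ hP) = 0 := by
    rw [← h3]; abel
  have heq : y ^ 2 = x ^ 3 + (-432 * d) := by
    have := hP.1
    rw [WeierstrassCurve.Affine.equation_iff] at this
    simpa using this
  have hnegY : W.negY x y = -y := by simp [WeierstrassCurve.Affine.negY, hW]
  by_cases hy0 : y = 0
  · -- then 2P = 0 and 3P = P ≠ 0
    have h2 : (WeierstrassCurve.Affine.Point.some _ _ hP) + (WeierstrassCurve.Affine.Point.some _ _ hP)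
        = 0 := WeierstrassCurve.Affine.Point.add_self_of_Y_eq (by rw [hnegY, hy0, neg_zero])
    rw [h2, zero_add] at h3'
    exact WeierstrassCurve.Affine.Point.some_ne_zero hP h3'
  · have hy : y ≠ W.negY x y := by
      rw [hnegY]
      intro h
      apply hy0
      have : 2 * y = 0 := by linear_combination h
      exact (mul_eq_zero.mp this).resolve_left hchar2
    have h2 : (WeierstrassCurve.Affine.Point.some _ _ hP) + (WeierstrassCurve.Affine.Point.some _ _ hP)
        = -WeierstrassCurve.Affine.Point.some _ _
            (WeierstrassCurve.Affine.nonsingular_negAdd hP hP fun hxy => hy hxy.right) :=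
      WeierstrassCurve.Affine.Point.add_self_of_Y_ne' hy
    have h2' : (WeierstrassCurve.Affine.Point.some _ _ hP) + (WeierstrassCurve.Affine.Point.some _ _ hP)
        = -(WeierstrassCurve.Affine.Point.some _ _ hP) := by
      rw [← neg_eq_of_add_eq_zero_left h3']
    rw [h2, neg_inj] at h2'
    -- extract equality of x-coordinates
    have hx : W.addX x x (W.slope x x y y) = x := by
      injection h2'
    have hslope : W.slope x x y y = 3 * x ^ 2 / (2 * y) := by
      rw [WeierstrassCurve.Affine.slope_of_Y_ne rfl hy, hnegY]
      norm_num [hW]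
      rw [two_mul]
    have h2y : (2 : F) * y ≠ 0 := mul_ne_zero hchar2 hy0
    -- λ² = 3x
    have hkey : 9 * x ^ 4 = 12 * x * y ^ 2 := by
      rw [hslope] at hx
      simp only [WeierstrassCurve.Affine.addX, hW] at hx
      field_simp at hx
      linear_combination hx
    -- substitute y² = x³ - 432 d
    have hfact : 3 * x * (x ^ 3 - 1728 * d) = 0 := by
      linear_combination -12 * x * heq - hkey
    have hfact' : x * (x ^ 3 - 1728 * d) = 0 :=
      (mul_eq_zero.mp (by linear_combination hfact : (3 : F) * (x * (x ^ 3 - 1728 * d)) = 0)).resolve_left hchar3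
    rcases mul_eq_zero.mp hfact' with hx0 | hx3
    · -- x = 0 : -3d = (y/12)²
      apply hsq'
      refine ⟨y / 12, ?_⟩
      have h12 : (12 : F) ≠ 0 := by
        have : (12 : F) = 2 * 2 * 3 := by norm_num
        rw [this]
        exact mul_ne_zero (mul_ne_zero hchar2 hchar2) hchar3
      field_simp
      subst hx0
      linear_combination -heq
    · -- x³ = 1728 d : d = (y/36)²
      apply hsq
      refine ⟨y / 36, ?_⟩
      have h36 : (36 : F) ≠ 0 := by
        have : (36 : F) = 2 * 2 * 3 * 3 := by norm_num
        rw [this]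
        exact mul_ne_zero (mul_ne_zero (mul_ne_zero hchar2 hchar2) hchar3) hchar3
      field_simp
      linear_combination -heq - hx3
end

section
/- Let d be a fundamental discriminant and let ℓ ≠ 3 be a prime dividing d. Then the elliptic curve E_d over the field ℚ_ℓ of ℓ-adic numbers, defined by the Weierstrass equation y² = x³ − 432d, has no ℚ_ℓ-rational point of order 3; that is, every point P ∈ E_d(ℚ_ℓ) with 3·P = O satisfies P = O. -/
private lemma padic_valuation_pow' {p : ℕ} [hp : Fact p.Prime] (x : ℚ_[p]) (hx : x ≠ 0) (n : ℕ) :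
    (x ^ n).valuation = n * x.valuation := by
  induction n with
  | zero => simp
  | succ n ih =>
    rw [pow_succ, Padic.valuation_mul (pow_ne_zero n hx) hx, ih]
    push_cast; ring

private lemma padic_val_pow_eq_contra {p : ℕ} [hp : Fact p.Prime] (n a : ℕ) (hn : n ≠ 0)
    (u : ℤ) (hu : ¬(p:ℤ) ∣ u) (x : ℚ_[p]) (hx : x ^ n = (((p:ℤ)^a * u : ℤ) : ℚ_[p]))
    (ha : ¬ (n:ℤ) ∣ (a:ℤ)) : False := by
  have hu0 : u ≠ 0 := by rintro rfl; exact hu (dvd_zero _)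
  have hp0 : p ≠ 0 := hp.out.ne_zero
  have hk0 : ((p:ℤ)^a * u) ≠ 0 := mul_ne_zero (pow_ne_zero _ (by exact_mod_cast hp0)) hu0
  have hc0 : (((p:ℤ)^a * u : ℤ) : ℚ_[p]) ≠ 0 := by exact_mod_cast hk0
  have hx0 : x ≠ 0 := by
    rintro rfl
    rw [zero_pow hn] at hx
    exact hc0 hx.symm
  have hval : ((x ^ n).valuation : ℤ) = a := by
    rw [hx, Padic.valuation_intCast]
    have h2 : ((p:ℤ)^a * u) = ((p^a : ℕ) : ℤ) * u := by push_cast; ring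
    rw [h2, padicValInt.mul (by exact_mod_cast pow_ne_zero a hp0) hu0,
      padicValInt.eq_zero_of_not_dvd hu, add_zero, padicValInt.of_nat,
      padicValNat.prime_pow]
  rw [padic_valuation_pow' x hx0 n] at hval
  exact ha ⟨x.valuation, hval.symm⟩

private lemma padic2_sq_ne_three_mod_four (u : ℤ) (hu : u % 4 = 3)
    (b : ℚ_[2]) (hb : b ^ 2 = ((u : ℤ) : ℚ_[2])) : False := by
  have hodd : ¬ ((2:ℤ) ∣ u) := by omega
  have hnorm : ‖((u : ℤ) : ℚ_[2])‖ = 1 := by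
    rcases lt_or_eq_of_le (Padic.norm_int_le_one (p := 2) u) with h | h
    · exact absurd ((Padic.norm_intCast_lt_one_iff (k := u)).mp h) (by exact_mod_cast hodd)
    · exact h
  have hbnorm : ‖b‖ = 1 := by
    have h2 : ‖b‖ ^ 2 = 1 := by rw [← norm_pow, hb, hnorm]
    nlinarith [norm_nonneg b]
  set b' : ℤ_[2] := ⟨b, le_of_eq hbnorm⟩ with hb'
  have hb2 : b' ^ 2 = ((u : ℤ) : ℤ_[2]) := by
    apply PadicInt.ext (p := 2)
    push_cast [hb']
    exact hb
  have hmap := congrArg (PadicInt.toZModPow 2) hb2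
  rw [map_pow, map_intCast] at hmap
  have hcast : ((u : ℤ) : ZMod (2^2)) = 3 := by
    have h3 : (u : ZMod (2^2)) = ((3 : ℤ) : ZMod (2^2)) := by
      rw [ZMod.intCast_eq_intCast_iff]
      show u % ((2^2 : ℕ) : ℤ) = 3 % ((2^2 : ℕ) : ℤ)
      norm_num; omega
    simpa using h3
  rw [hcast] at hmap
  have hcontra : ∀ c : ZMod (2^2), c ^ 2 ≠ 3 := by decide
  exact hcontra _ hmap

private lemma prime_eq_two_or_three_of_dvd {ℓ : ℕ} (hp : ℓ.Prime) (a b : ℕ)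
    (h : (ℓ:ℤ) ∣ (2:ℤ)^a * 3^b) : ℓ = 2 ∨ ℓ = 3 := by
  have h' : ℓ ∣ 2^a * 3^b := by exact_mod_cast h
  rcases (Nat.Prime.dvd_mul hp).mp h' with h2 | h3
  · exact Or.inl ((Nat.prime_dvd_prime_iff_eq hp Nat.prime_two).mp (hp.dvd_of_dvd_pow h2))
  · exact Or.inr ((Nat.prime_dvd_prime_iff_eq hp Nat.prime_three).mp (hp.dvd_of_dvd_pow h3))

open Classical in
open WeierstrassCurve WeierstrassCurve.Affine WeierstrassCurve.Affine.Point in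
/-- **Key step in Lemma 5.5 of Kriz–Li.** Let `d` be a fundamental discriminant and
`ℓ ≠ 3` a prime dividing `d`. Then the elliptic curve `E_d : y² = x³ − 432d` over the
`ℓ`-adic field `ℚ_ℓ` has no `ℚ_ℓ`-rational point of order 3: every `P ∈ E_d(ℚ_ℓ)` with
`3·P = O` is `O`. -/
theorem Ed_no_three_torsion_over_Qell
    (d : ℤ)
    (hfund : (d % 4 = 1 ∧ Squarefree d) ∨
      (∃ m : ℤ, d = 4 * m ∧ Squarefree m ∧ (m % 4 = 2 ∨ m % 4 = 3)))
    (ℓ : ℕ) [Fact ℓ.Prime] (hℓ3 : ℓ ≠ 3) (hdvd : (ℓ : ℤ) ∣ d)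
    (Ed : WeierstrassCurve ℚ_[ℓ])
    (hEd : Ed = { a₁ := 0, a₂ := 0, a₃ := 0, a₄ := 0, a₆ := -432 * (d : ℚ_[ℓ]) }) :
    ∀ P : Ed.toAffine.Point, 3 • P = 0 → P = 0 := by
  subst hEd
  have hp := (Fact.out : ℓ.Prime)
  have hprime : Prime (ℓ:ℤ) := Nat.prime_iff_prime_int.mp hp
  have hℓ0 : (ℓ:ℤ) ≠ 0 := by exact_mod_cast hp.ne_zero
  have hd0 : d ≠ 0 := by
    rcases hfund with ⟨h1, _⟩ | ⟨m, rfl, _, hm⟩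
    · omega
    · rcases hm with h | h <;> omega
  intro P hP
  cases P with
  | zero => rfl
  | @some x y h =>
    exfalso
    have e3 : (Point.some _ _ h + Point.some _ _ h) + Point.some _ _ h = 0 := by
      rw [← hP, succ_nsmul, two_nsmul]
    have e2 : Point.some _ _ h + Point.some _ _ h = -Point.some _ _ h := eq_neg_of_add_eq_zero_left e3
    by_cases hy : y = ({ a₁ := 0, a₂ := 0, a₃ := 0, a₄ := 0, a₆ := -432 * (d : ℚ_[ℓ]) } :
        WeierstrassCurve ℚ_[ℓ]).toAffine.negY x y
    · rw [add_self_of_Y_eq hy] at e2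
      exact some_ne_zero h (neg_eq_zero.mp e2.symm)
    · rw [add_self_of_Y_ne hy, neg_some] at e2
      simp only [Point.some.injEq] at e2
      have hxx := e2.1
      have hy0 : y ≠ 0 := by
        intro h0
        apply hy
        simp [negY, h0]
      have heq : y ^ 2 = x ^ 3 - 432 * (d : ℚ_[ℓ]) := by
        have := h.1
        rw [equation_iff] at this
        simpa using by linear_combination this
      have hxx' : ((3 * x ^ 2) / (2 * y)) ^ 2 - 2 * x = x := by
        rw [slope_of_Y_ne rfl hy] at hxx
        simp only [negY, addX] at hxx ⊢
        rw [show y - (-y - 0 * x - 0) = 2 * y by ring] at hxx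
        linear_combination hxx
      have hmain : x * (x ^ 3 - 1728 * (d : ℚ_[ℓ])) = 0 := by
        have h2y : (2 : ℚ_[ℓ]) * y ≠ 0 := by simp [hy0]
        field_simp at hxx'
        linear_combination (-1/3 : ℚ_[ℓ]) * hxx' - 4 * x * heq
      by_cases hℓ2 : ℓ = 2
      · -- ℓ = 2
        subst hℓ2
        obtain ⟨m, rfl, hsf, hm⟩ : ∃ m : ℤ, d = 4 * m ∧ Squarefree m ∧ (m % 4 = 2 ∨ m % 4 = 3) := by
          rcases hfund with ⟨h1, _⟩ | hm
          · exfalso; omega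
          · exact hm
        rcases mul_eq_zero.mp hmain with hx0 | hcube
        · -- x = 0 : y² = -432·4m
          have hsq : y ^ 2 = ((-432 * (4 * m) : ℤ) : ℚ_[2]) := by
            rw [heq, hx0]
            push_cast
            ring
          rcases hm with h2 | h3
          · obtain ⟨n, rfl, hodd⟩ : ∃ n : ℤ, m = 2 * n ∧ n % 2 = 1 := ⟨m / 2, by omega, by omega⟩
            refine padic_val_pow_eq_contra (p := 2) 2 7 (by norm_num) (-27 * n) (by omega) y ?_
              (by norm_num)
            rw [hsq]
            push_cast
            ring
          · refine padic2_sq_ne_three_mod_four (-27 * m) (by omega) (y / 8) ?_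
            push_cast at hsq ⊢
            field_simp
            linear_combination hsq
        · -- x ≠ 0 : x³ = 1728·4m, y² = 1296·4m
          have hx0 : x ≠ 0 := by
            intro h0
            rw [h0] at hcube
            have hmul : (1728 : ℚ_[2]) * ((4 * m : ℤ) : ℚ_[2]) = 0 := by
              linear_combination -hcube
            rcases mul_eq_zero.mp hmul with hc | hc
            · norm_num at hc
            · have : (4 * m : ℤ) = 0 := by exact_mod_cast hc
              omega
          rcases hm with h2 | h3
          · -- m ≡ 2 : y² = 1296·8n = 2⁷·81n
            obtain ⟨n, rfl, hodd⟩ : ∃ n : ℤ, m = 2 * n ∧ n % 2 = 1 := ⟨m / 2, by omega, by omega⟩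
            refine padic_val_pow_eq_contra (p := 2) 2 7 (by norm_num) (81 * n) (by omega) y ?_
              (by norm_num)
            rw [heq]
            push_cast
            push_cast at hcube
            linear_combination hcube
          · -- m ≡ 3 : x³ = 2⁸·27m
            refine padic_val_pow_eq_contra (p := 2) 3 8 (by norm_num) (27 * m) (by omega) x ?_
              (by norm_num)
            push_cast
            push_cast at hcube
            linear_combination hcube
      · -- ℓ odd
        obtain ⟨e, he⟩ := hdvd
        have hnot : ¬ (ℓ:ℤ) ∣ e := by
          intro hee
          have h2 : (ℓ:ℤ) * (ℓ:ℤ) ∣ d := by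
            obtain ⟨f, hf⟩ := hee
            exact ⟨f, by rw [he, hf]; ring⟩
          have hl4 : ¬ (ℓ:ℤ) ∣ 4 := by
            intro h4
            rcases prime_eq_two_or_three_of_dvd hp 2 0 (by norm_num; exact_mod_cast h4) with
              h | h <;> omega
          rcases hfund with ⟨_, hsf⟩ | ⟨m, rfl, hsf, _⟩
          · have := hsf _ h2
            rw [Int.isUnit_iff] at this
            have h2le := hp.two_le
            omega
          · have hlm : (ℓ:ℤ) ∣ m := by
              rcases hprime.dvd_mul.mp (show (ℓ:ℤ) ∣ 4 * m from ⟨e, he⟩) with h4 | hm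
              · exact absurd h4 hl4
              · exact hm
            obtain ⟨n, rfl⟩ := hlm
            have h3 : (ℓ:ℤ) ∣ 4 * n := by
              have h2' : (ℓ:ℤ) * (ℓ:ℤ) ∣ (ℓ:ℤ) * (4 * n) := by
                rw [show (ℓ:ℤ) * (4 * n) = 4 * ((ℓ:ℤ) * n) by ring]
                exact h2
              exact (mul_dvd_mul_iff_left hℓ0).mp h2'
            rcases hprime.dvd_mul.mp h3 with h4 | hn
            · exact absurd h4 hl4
            · obtain ⟨f, rfl⟩ := hn
              have := hsf _ ⟨f, by ring⟩
              rw [Int.isUnit_iff] at this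
              have h2le := hp.two_le
              omega
        have hl432 : ¬ (ℓ:ℤ) ∣ 432 := by
          intro hh
          rcases prime_eq_two_or_three_of_dvd hp 4 3 (by norm_num; exact_mod_cast hh) with
            h | h <;> omega
        have hl1728 : ¬ (ℓ:ℤ) ∣ 1728 := by
          intro hh
          rcases prime_eq_two_or_three_of_dvd hp 6 3 (by norm_num; exact_mod_cast hh) with
            h | h <;> omega
        rcases mul_eq_zero.mp hmain with hx0 | hcube
        · refine padic_val_pow_eq_contra (p := ℓ) 2 1 (by norm_num) (-432 * e) ?_ y ?_
            (by norm_num)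
          · intro hh
            rcases hprime.dvd_mul.mp hh with h4 | h4
            · exact hl432 ((dvd_neg).mp h4)
            · exact hnot h4
          · rw [heq, hx0, he]
            push_cast
            ring
        · have hx0 : x ≠ 0 := by
            intro h0
            rw [h0] at hcube
            have hmul : (1728 : ℚ_[ℓ]) * ((d : ℤ) : ℚ_[ℓ]) = 0 := by linear_combination -hcube
            rcases mul_eq_zero.mp hmul with hc | hc
            · norm_num at hc
            · exact hd0 (by exact_mod_cast hc)
          refine padic_val_pow_eq_contra (p := ℓ) 3 1 (by norm_num) (1728 * e) ?_ x ?_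
            (by norm_num)
          · intro hh
            rcases hprime.dvd_mul.mp hh with h4 | h4
            · exact hl1728 h4
            · exact hnot h4
          · rw [he] at hcube
            push_cast
            push_cast at hcube
            linear_combination hcube
end
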